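/- The set S of admissible resource triples is closed under the componentwise meet operation ∧ defined by: (q_a ∧ q_b) has t_bg = max(t_bg(a), t_bg(b)), (c_do, t_do) = lexicographic minimum of (c_do(a), t_do(a)) and (c_do(b), t_do(b)), and (c_dt, t_dt) = lexicographic minimum of (c_dt(a), t_dt(a)) and (c_dt(b), t_dt(b)). -/

import Mathlib

structure Res where
  tbg : ℕ
  cdo : ℕ
  tdo : ℕ
  cdt : ℕ
  tdt : ℕ

def Res.adm (q : Res) : Prop :=
  (q.tdo < q.tdt → q.cdo = q.cdt) ∧
  (q.tdt < q.tdo → q.cdo = q.cdt - 1) ∧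
  (q.tdo = q.tdt → q.cdo = q.cdt ∨ q.cdo = q.cdt - 1)

/-- Lexicographic order `≤_lex` on `ℕ²`. -/
def lexLe (p q : ℕ × ℕ) : Prop :=
  p.1 < q.1 ∨ (p.1 = q.1 ∧ p.2 ≤ q.2)

instance (p q : ℕ × ℕ) : Decidable (lexLe p q) := by
  unfold lexLe; infer_instance

/-- Lexicographic minimum on `ℕ²`. -/
def lexMin (p q : ℕ × ℕ) : ℕ × ℕ :=
  if lexLe p q then p else q

/-- The meet operation `∧` on resources: max of start times, lexicographic
minima of the `(c, t)`-pairs. -/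
def Res.meet (a b : Res) : Res where
  tbg := max a.tbg b.tbg
  cdo := (lexMin (a.cdo, a.tdo) (b.cdo, b.tdo)).1
  tdo := (lexMin (a.cdo, a.tdo) (b.cdo, b.tdo)).2
  cdt := (lexMin (a.cdt, a.tdt) (b.cdt, b.tdt)).1
  tdt := (lexMin (a.cdt, a.tdt) (b.cdt, b.tdt)).2

/-- `S` is closed under the meet operation. -/
theorem S_closed_under_meet (a b : Res) (ha : a.adm) (hb : b.adm) :
    (a.meet b).adm := by
  obtain ⟨ha1, ha2, ha3⟩ := ha
  obtain ⟨hb1, hb2, hb3⟩ := hb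
  unfold Res.adm Res.meet lexMin lexLe at *
  simp only at *
  by_cases h1 : a.cdo < b.cdo ∨ a.cdo = b.cdo ∧ a.tdo ≤ b.tdo <;>
    by_cases h2 : a.cdt < b.cdt ∨ a.cdt = b.cdt ∧ a.tdt ≤ b.tdt <;>
    simp only [h1, h2, if_true, if_false] <;> omega
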